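/- Let C be a (2,M,q) code over Q. Then C is a 3-MIPPC(2,M,q) if and only if both of the following hold: (I) for any distinct a₁, a₂ ∈ Q, |A¹_{a₁} ∩ A¹_{a₂}| ≤ 1; and (II) there do not exist distinct a₁, a₂, a₃ ∈ Q and distinct b₁, b₂, b₃ ∈ Q with b₁, b₂ ∈ A¹_{a₁}, b₂, b₃ ∈ A¹_{a₂}, and b₁, b₃ ∈ A¹_{a₃}. -/
import Mathlib


/-- The descendant code of a sub-code of a code of length 2, viewed as a set of pairs. -/
def desc2 {q : ℕ} (C' : Finset (Fin q × Fin q)) : Set (Fin q × Fin q) :=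
  {x | (∃ c ∈ C', c.1 = x.1) ∧ (∃ c ∈ C', c.2 = x.2)}

/-- `C` is a `t`-MIPPC of length 2: for every descendant set produced by some nonempty
sub-code of size at most `t`, all such parent sets have a common codeword. -/
def isMIPPC2 {q : ℕ} (t : ℕ) (C : Finset (Fin q × Fin q)) : Prop :=
  ∀ S : Set (Fin q × Fin q),
    (∃ C' : Finset (Fin q × Fin q), C' ⊆ C ∧ C'.Nonempty ∧ C'.card ≤ t ∧ desc2 C' = S) →
    ∃ c, ∀ C' : Finset (Fin q × Fin q),
      C' ⊆ C → C'.Nonempty → C'.card ≤ t → desc2 C' = S → c ∈ C'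

/-- `A¹_a = {b : (a,b) ∈ C}`. -/
def A1 {q : ℕ} (C : Finset (Fin q × Fin q)) (a : Fin q) : Finset (Fin q) :=
  (C.filter (fun c => c.1 = a)).image Prod.snd

/-- Condition (I). -/
def CondI {q : ℕ} (C : Finset (Fin q × Fin q)) : Prop :=
  ∀ a₁ a₂ : Fin q, a₁ ≠ a₂ → (A1 C a₁ ∩ A1 C a₂).card ≤ 1

/-- Condition (II). -/
def CondII {q : ℕ} (C : Finset (Fin q × Fin q)) : Prop :=
  ¬ ∃ a₁ a₂ a₃ b₁ b₂ b₃ : Fin q,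
      a₁ ≠ a₂ ∧ a₁ ≠ a₃ ∧ a₂ ≠ a₃ ∧ b₁ ≠ b₂ ∧ b₁ ≠ b₃ ∧ b₂ ≠ b₃ ∧
      b₁ ∈ A1 C a₁ ∧ b₂ ∈ A1 C a₁ ∧ b₂ ∈ A1 C a₂ ∧ b₃ ∈ A1 C a₂ ∧
      b₁ ∈ A1 C a₃ ∧ b₃ ∈ A1 C a₃

lemma mem_A1 {q : ℕ} {C : Finset (Fin q × Fin q)} {a b : Fin q} :
    b ∈ A1 C a ↔ (a, b) ∈ C := by
  constructor
  · intro h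
    simp only [A1, Finset.mem_image, Finset.mem_filter] at h
    obtain ⟨c, ⟨hc, h1⟩, h2⟩ := h
    rwa [show (a, b) = c from Prod.ext_iff.mpr ⟨h1.symm, h2.symm⟩]
  · intro h
    simp only [A1, Finset.mem_image, Finset.mem_filter]
    exact ⟨(a, b), ⟨h, rfl⟩, rfl⟩

lemma condI_contra {q : ℕ} {C : Finset (Fin q × Fin q)} (hI : CondI C)
    {x₁ x₂ y₁ y₂ : Fin q} (hx : x₁ ≠ x₂) (hy : y₁ ≠ y₂)
    (h11 : (x₁, y₁) ∈ C) (h12 : (x₁, y₂) ∈ C)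
    (h21 : (x₂, y₁) ∈ C) (h22 : (x₂, y₂) ∈ C) : False := by
  have hsub : ({y₁, y₂} : Finset (Fin q)) ⊆ A1 C x₁ ∩ A1 C x₂ := by
    intro y hy'
    rcases Finset.mem_insert.mp hy' with rfl | hy'
    · exact Finset.mem_inter.mpr ⟨mem_A1.mpr h11, mem_A1.mpr h21⟩
    · rw [Finset.mem_singleton] at hy'
      subst hy'
      exact Finset.mem_inter.mpr ⟨mem_A1.mpr h12, mem_A1.mpr h22⟩
  have hle := Finset.card_le_card hsub
  rw [Finset.card_pair hy] at hle
  have := hI x₁ x₂ hx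
  omega

lemma exists_partner {q : ℕ} {D : Finset (Fin q × Fin q)} {a : Fin q}
    (h : a ∈ D.image Prod.fst) : ∃ b, (a, b) ∈ D := by
  obtain ⟨c, hc, h1⟩ := Finset.mem_image.mp h
  exact ⟨c.2, by rwa [show (a, c.2) = c from Prod.ext_iff.mpr ⟨h1.symm, rfl⟩]⟩

lemma exists_partner' {q : ℕ} {D : Finset (Fin q × Fin q)} {b : Fin q}
    (h : b ∈ D.image Prod.snd) : ∃ a, (a, b) ∈ D := by
  obtain ⟨c, hc, h2⟩ := Finset.mem_image.mp h
  exact ⟨c.1, by rwa [show (c.1, b) = c from Prod.ext_iff.mpr ⟨rfl, h2.symm⟩]⟩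

lemma desc2_eq_imgs {q : ℕ} {C' C₀ : Finset (Fin q × Fin q)}
    (h : desc2 C' = desc2 C₀) (h1 : C'.Nonempty) (h2 : C₀.Nonempty) :
    C'.image Prod.fst = C₀.image Prod.fst ∧ C'.image Prod.snd = C₀.image Prod.snd := by
  obtain ⟨e, he⟩ := h1
  obtain ⟨f, hf⟩ := h2
  constructor
  · ext a
    simp only [Finset.mem_image]
    constructor
    · rintro ⟨c, hc, rfl⟩
      have hm : ((c.1, e.2) : Fin q × Fin q) ∈ desc2 C₀ := by
        rw [← h]; exact ⟨⟨c, hc, rfl⟩, ⟨e, he, rfl⟩⟩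
      obtain ⟨⟨d, hd, hd1⟩, -⟩ := hm
      exact ⟨d, hd, hd1⟩
    · rintro ⟨c, hc, rfl⟩
      have hm : ((c.1, f.2) : Fin q × Fin q) ∈ desc2 C' := by
        rw [h]; exact ⟨⟨c, hc, rfl⟩, ⟨f, hf, rfl⟩⟩
      obtain ⟨⟨d, hd, hd1⟩, -⟩ := hm
      exact ⟨d, hd, hd1⟩
  · ext b
    simp only [Finset.mem_image]
    constructor
    · rintro ⟨c, hc, rfl⟩
      have hm : ((e.1, c.2) : Fin q × Fin q) ∈ desc2 C₀ := by
        rw [← h]; exact ⟨⟨e, he, rfl⟩, ⟨c, hc, rfl⟩⟩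
      obtain ⟨-, ⟨d, hd, hd2⟩⟩ := hm
      exact ⟨d, hd, hd2⟩
    · rintro ⟨c, hc, rfl⟩
      have hm : ((f.1, c.2) : Fin q × Fin q) ∈ desc2 C' := by
        rw [h]; exact ⟨⟨f, hf, rfl⟩, ⟨c, hc, rfl⟩⟩
      obtain ⟨-, ⟨d, hd, hd2⟩⟩ := hm
      exact ⟨d, hd, hd2⟩

lemma desc2_triple {q : ℕ} (p₁ p₂ p₃ : Fin q × Fin q) :
    desc2 {p₁, p₂, p₃} = {x | (p₁.1 = x.1 ∨ p₂.1 = x.1 ∨ p₃.1 = x.1) ∧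
      (p₁.2 = x.2 ∨ p₂.2 = x.2 ∨ p₃.2 = x.2)} := by
  ext x
  simp only [desc2, Set.mem_setOf_eq, Finset.mem_insert, Finset.mem_singleton]
  constructor
  · rintro ⟨⟨c, hc, h1⟩, ⟨d, hd, h2⟩⟩
    rcases hc with rfl | rfl | rfl <;> rcases hd with rfl | rfl | rfl <;>
      exact ⟨by tauto, by tauto⟩
  · rintro ⟨h1, h2⟩
    constructor
    · rcases h1 with h | h | h
      exacts [⟨p₁, by simp, h⟩, ⟨p₂, by simp, h⟩, ⟨p₃, by simp, h⟩]
    · rcases h2 with h | h | h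
      exacts [⟨p₁, by simp, h⟩, ⟨p₂, by simp, h⟩, ⟨p₃, by simp, h⟩]


/-- A `(2,M,q)` code is a 3-MIPPC iff conditions (I) and (II) hold. -/
theorem mippc3_iff_condI_condII {q : ℕ} (C : Finset (Fin q × Fin q)) :
    isMIPPC2 3 C ↔ CondI C ∧ CondII C := by
  constructor
  · intro h
    refine ⟨?_, ?_⟩
    ·
      intro a₁ a₂ ha
      by_contra hcon
      push_neg at hcon
      obtain ⟨b₁, hb₁, b₂, hb₂, hb⟩ := Finset.one_lt_card.mp hcon
      rw [Finset.mem_inter] at hb₁ hb₂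
      have e11 : (a₁, b₁) ∈ C := mem_A1.mp hb₁.1
      have e21 : (a₂, b₁) ∈ C := mem_A1.mp hb₁.2
      have e12 : (a₁, b₂) ∈ C := mem_A1.mp hb₂.1
      have e22 : (a₂, b₂) ∈ C := mem_A1.mp hb₂.2
      set D₁ : Finset (Fin q × Fin q) := {(a₁, b₁), (a₂, b₂)} with hD₁
      set D₂ : Finset (Fin q × Fin q) := {(a₁, b₂), (a₂, b₁)} with hD₂
      have hsub₁ : D₁ ⊆ C := by
        intro x hx
        rw [hD₁, Finset.mem_insert, Finset.mem_singleton] at hx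
        rcases hx with rfl | rfl <;> assumption
      have hsub₂ : D₂ ⊆ C := by
        intro x hx
        rw [hD₂, Finset.mem_insert, Finset.mem_singleton] at hx
        rcases hx with rfl | rfl <;> assumption
      have hcard₁ : D₁.card ≤ 3 := le_trans (Finset.card_insert_le _ _) (by simp)
      have hcard₂ : D₂.card ≤ 3 := le_trans (Finset.card_insert_le _ _) (by simp)
      have hne₁ : D₁.Nonempty := ⟨_, Finset.mem_insert_self _ _⟩
      have hne₂ : D₂.Nonempty := ⟨_, Finset.mem_insert_self _ _⟩
      have hdeq : desc2 D₂ = desc2 D₁ := by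
        ext ⟨x, y⟩
        simp only [desc2, hD₁, hD₂, Set.mem_setOf_eq, Finset.mem_insert, Finset.mem_singleton]
        constructor
        · rintro ⟨⟨c, hc | hc, h1⟩, ⟨d, hd | hd, h2⟩⟩ <;> subst hc <;> subst hd <;>
            simp at h1 h2 ⊢ <;> tauto
        · rintro ⟨⟨c, hc | hc, h1⟩, ⟨d, hd | hd, h2⟩⟩ <;> subst hc <;> subst hd <;>
            simp at h1 h2 ⊢ <;> tauto
      obtain ⟨c, hcom⟩ := h (desc2 D₁) ⟨D₁, hsub₁, hne₁, hcard₁, rfl⟩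
      have h1 := hcom D₁ hsub₁ hne₁ hcard₁ rfl
      have h2 := hcom D₂ hsub₂ hne₂ hcard₂ hdeq
      rw [hD₁, Finset.mem_insert, Finset.mem_singleton] at h1
      rw [hD₂, Finset.mem_insert, Finset.mem_singleton] at h2
      rcases h1 with rfl | rfl <;>
        simp only [Prod.mk.injEq] at h2 <;> tauto
    ·
      rintro ⟨a₁, a₂, a₃, b₁, b₂, b₃, ha12, ha13, ha23, hb12, hb13, hb23,
        h11, h21, h22, h32, h13, h33⟩
      have e11 : (a₁, b₁) ∈ C := mem_A1.mp h11
      have e12 : (a₁, b₂) ∈ C := mem_A1.mp h21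
      have e22 : (a₂, b₂) ∈ C := mem_A1.mp h22
      have e23 : (a₂, b₃) ∈ C := mem_A1.mp h32
      have e31 : (a₃, b₁) ∈ C := mem_A1.mp h13
      have e33 : (a₃, b₃) ∈ C := mem_A1.mp h33
      set D₁ : Finset (Fin q × Fin q) := {(a₁, b₁), (a₂, b₂), (a₃, b₃)} with hD₁
      set D₂ : Finset (Fin q × Fin q) := {(a₁, b₂), (a₂, b₃), (a₃, b₁)} with hD₂
      have hsub₁ : D₁ ⊆ C := by
        intro x hx
        rw [hD₁, Finset.mem_insert, Finset.mem_insert, Finset.mem_singleton] at hx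
        rcases hx with rfl | rfl | rfl <;> assumption
      have hsub₂ : D₂ ⊆ C := by
        intro x hx
        rw [hD₂, Finset.mem_insert, Finset.mem_insert, Finset.mem_singleton] at hx
        rcases hx with rfl | rfl | rfl <;> assumption
      have hcard₁ : D₁.card ≤ 3 := by
        have h1 := Finset.card_insert_le (a₁, b₁) ({(a₂, b₂), (a₃, b₃)} : Finset (Fin q × Fin q))
        have h2 := Finset.card_insert_le (a₂, b₂) ({(a₃, b₃)} : Finset (Fin q × Fin q))
        rw [hD₁]
        simp only [Finset.card_singleton] at h2 ⊢
        omega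
      have hcard₂ : D₂.card ≤ 3 := by
        have h1 := Finset.card_insert_le (a₁, b₂) ({(a₂, b₃), (a₃, b₁)} : Finset (Fin q × Fin q))
        have h2 := Finset.card_insert_le (a₂, b₃) ({(a₃, b₁)} : Finset (Fin q × Fin q))
        rw [hD₂]
        simp only [Finset.card_singleton] at h2 ⊢
        omega
      have hne₁ : D₁.Nonempty := ⟨_, Finset.mem_insert_self _ _⟩
      have hne₂ : D₂.Nonempty := ⟨_, Finset.mem_insert_self _ _⟩
      have hdeq : desc2 D₂ = desc2 D₁ := by
        rw [hD₁, hD₂, desc2_triple, desc2_triple]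
        ext x
        simp only [Set.mem_setOf_eq]
        constructor <;> (rintro ⟨h1, h2⟩; exact ⟨by tauto, by tauto⟩)
      obtain ⟨c, hcom⟩ := h (desc2 D₁) ⟨D₁, hsub₁, hne₁, hcard₁, rfl⟩
      have h1 := hcom D₁ hsub₁ hne₁ hcard₁ rfl
      have h2 := hcom D₂ hsub₂ hne₂ hcard₂ hdeq
      rw [hD₁, Finset.mem_insert, Finset.mem_insert, Finset.mem_singleton] at h1
      rw [hD₂, Finset.mem_insert, Finset.mem_insert, Finset.mem_singleton] at h2
      rcases h1 with rfl | rfl | rfl <;>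
        simp only [Prod.mk.injEq] at h2 <;> tauto
  · rintro ⟨hI, hII⟩
    rintro S ⟨C₀, hsub0, hne0, hcard0, hdesc0⟩
    set X := C₀.image Prod.fst with hXdef
    set Y := C₀.image Prod.snd with hYdef
    have himg : ∀ C' : Finset (Fin q × Fin q), C'.Nonempty → desc2 C' = S →
        C'.image Prod.fst = X ∧ C'.image Prod.snd = Y := fun C' hne hd =>
      desc2_eq_imgs (hd.trans hdesc0.symm) hne hne0
    have hXne : X.Nonempty := hne0.image _
    have hYne : Y.Nonempty := hne0.image _
    have hX3 : X.card ≤ 3 := le_trans Finset.card_image_le hcard0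
    have hY3 : Y.card ≤ 3 := le_trans Finset.card_image_le hcard0
    have hX1 : 1 ≤ X.card := Finset.card_pos.mpr hXne
    have hY1 : 1 ≤ Y.card := Finset.card_pos.mpr hYne
    have forcedB : ∀ a b : Fin q, b ∈ Y → (∀ a', a' ∈ X → (a', b) ∈ C → a' = a) →
        ∃ c, ∀ C' : Finset (Fin q × Fin q),
          C' ⊆ C → C'.Nonempty → C'.card ≤ 3 → desc2 C' = S → c ∈ C' := by
      intro a b hb hf
      refine ⟨(a, b), fun C' hsub hne _ hd => ?_⟩
      obtain ⟨h1, h2⟩ := himg C' hne hd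
      rw [← h2] at hb
      obtain ⟨a', ha'⟩ := exists_partner' hb
      have haX : a' ∈ X := by
        rw [← h1]
        exact Finset.mem_image_of_mem _ ha'
      have heq := hf a' haX (hsub ha')
      rwa [← heq]
    have forcedA : ∀ a b : Fin q, a ∈ X → (∀ b', b' ∈ Y → (a, b') ∈ C → b' = b) →
        ∃ c, ∀ C' : Finset (Fin q × Fin q),
          C' ⊆ C → C'.Nonempty → C'.card ≤ 3 → desc2 C' = S → c ∈ C' := by
      intro a b ha hf
      refine ⟨(a, b), fun C' hsub hne _ hd => ?_⟩
      obtain ⟨h1, h2⟩ := himg C' hne hd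
      rw [← h1] at ha
      obtain ⟨b', hb'⟩ := exists_partner ha
      have hbY : b' ∈ Y := by
        rw [← h2]
        exact Finset.mem_image_of_mem _ hb'
      have heq := hf b' hbY (hsub hb')
      rwa [← heq]
    rcases (show X.card = 1 ∨ Y.card = 1 ∨ (X.card = 2 ∧ 2 ≤ Y.card) ∨
        (Y.card = 2 ∧ X.card = 3) ∨ (X.card = 3 ∧ Y.card = 3) by omega) with
      hm | hn | ⟨hm, hn⟩ | ⟨hn, hm⟩ | ⟨hm, hn⟩
    · obtain ⟨a, hXa⟩ := Finset.card_eq_one.mp hm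
      obtain ⟨b, hb⟩ := hYne
      exact forcedB a b hb (fun a' ha' _ => by
        rw [hXa, Finset.mem_singleton] at ha'; exact ha')
    · obtain ⟨b, hYb⟩ := Finset.card_eq_one.mp hn
      obtain ⟨a, ha⟩ := hXne
      exact forcedA a b ha (fun b' hb' _ => by
        rw [hYb, Finset.mem_singleton] at hb'; exact hb')
    · -- X.card = 2, 2 ≤ Y.card
      by_cases hf : ∃ a b : Fin q, b ∈ Y ∧ ∀ a', a' ∈ X → (a', b) ∈ C → a' = a
      · obtain ⟨a, b, hb, h⟩ := hf
        exact forcedB a b hb h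
      · push_neg at hf
        obtain ⟨a₁, a₂, ha12, hXeq⟩ := Finset.card_eq_two.mp hm
        obtain ⟨b₁, hb₁, b₂, hb₂, hb12⟩ := Finset.one_lt_card.mp hn
        have edge : ∀ b, b ∈ Y → (a₁, b) ∈ C ∧ (a₂, b) ∈ C := by
          intro b hb
          constructor
          · obtain ⟨a', haX, haC, hane⟩ := hf a₂ b hb
            rw [hXeq, Finset.mem_insert, Finset.mem_singleton] at haX
            rcases haX with rfl | rfl
            · exact haC
            · exact absurd rfl hane
          · obtain ⟨a', haX, haC, hane⟩ := hf a₁ b hb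
            rw [hXeq, Finset.mem_insert, Finset.mem_singleton] at haX
            rcases haX with rfl | rfl
            · exact absurd rfl hane
            · exact haC
        obtain ⟨e1, e2⟩ := edge b₁ hb₁
        obtain ⟨e3, e4⟩ := edge b₂ hb₂
        exact (condI_contra hI ha12 hb12 e1 e3 e2 e4).elim
    · -- Y.card = 2, X.card = 3
      by_cases hf : ∃ a b : Fin q, a ∈ X ∧ ∀ b', b' ∈ Y → (a, b') ∈ C → b' = b
      · obtain ⟨a, b, ha, h⟩ := hf
        exact forcedA a b ha h
      · push_neg at hf
        obtain ⟨b₁, b₂, hb12, hYeq⟩ := Finset.card_eq_two.mp hn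
        obtain ⟨a₁, ha₁, a₂, ha₂, ha12⟩ := Finset.one_lt_card.mp (show 1 < X.card by omega)
        have edge : ∀ a, a ∈ X → (a, b₁) ∈ C ∧ (a, b₂) ∈ C := by
          intro a ha
          constructor
          · obtain ⟨b', hbY, hbC, hbne⟩ := hf a b₂ ha
            rw [hYeq, Finset.mem_insert, Finset.mem_singleton] at hbY
            rcases hbY with rfl | rfl
            · exact hbC
            · exact absurd rfl hbne
          · obtain ⟨b', hbY, hbC, hbne⟩ := hf a b₁ ha
            rw [hYeq, Finset.mem_insert, Finset.mem_singleton] at hbY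
            rcases hbY with rfl | rfl
            · exact absurd rfl hbne
            · exact hbC
        obtain ⟨e1, e2⟩ := edge a₁ ha₁
        obtain ⟨e3, e4⟩ := edge a₂ ha₂
        exact (condI_contra hI ha12 hb12 e1 e2 e3 e4).elim
    · -- X.card = 3, Y.card = 3
      have hc0 : C₀.card = 3 := le_antisymm hcard0 (by
        calc 3 = X.card := hm.symm
          _ ≤ C₀.card := Finset.card_image_le)
      have hYC : (C₀.image Prod.snd).card = C₀.card := by
        rw [← hYdef]; omega
      have hinj0 : Set.InjOn Prod.snd (C₀ : Set (Fin q × Fin q)) :=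
        Finset.card_image_iff.mp hYC
      obtain ⟨a₁, a₂, a₃, ha12, ha13, ha23, hXeq⟩ := Finset.card_eq_three.mp hm
      have hmem : ∀ a, a ∈ X → ∃ b, (a, b) ∈ C₀ := fun a ha => exists_partner (by
        rw [hXdef] at ha; exact ha)
      obtain ⟨b₁, hb₁⟩ := hmem a₁ (by rw [hXeq]; simp)
      obtain ⟨b₂, hb₂⟩ := hmem a₂ (by rw [hXeq]; simp)
      obtain ⟨b₃, hb₃⟩ := hmem a₃ (by rw [hXeq]; simp)
      have hbY : ∀ {x y : Fin q}, (x, y) ∈ C₀ → y ∈ Y := fun h => by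
        rw [hYdef]; exact Finset.mem_image_of_mem _ h
      have hbne : ∀ {x y u v : Fin q}, (x, y) ∈ C₀ → (u, v) ∈ C₀ → x ≠ u → y ≠ v := by
        intro x y u v h1 h2 hxu h
        exact hxu (congrArg Prod.fst (hinj0 (Finset.mem_coe.mpr h1) (Finset.mem_coe.mpr h2) h))
      have hb12 : b₁ ≠ b₂ := hbne hb₁ hb₂ ha12
      have hb13 : b₁ ≠ b₃ := hbne hb₁ hb₃ ha13
      have hb23 : b₂ ≠ b₃ := hbne hb₂ hb₃ ha23
      have hsubY : ({b₁, b₂, b₃} : Finset (Fin q)) ⊆ Y := by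
        intro y hy
        rw [Finset.mem_insert, Finset.mem_insert, Finset.mem_singleton] at hy
        rcases hy with rfl | rfl | rfl
        exacts [hbY hb₁, hbY hb₂, hbY hb₃]
      have hcard3 : ({b₁, b₂, b₃} : Finset (Fin q)).card = 3 := by
        rw [Finset.card_insert_of_notMem (by simp [hb12, hb13]),
          Finset.card_insert_of_notMem (by simp [hb23]), Finset.card_singleton]
      have hYeq : Y = {b₁, b₂, b₃} := (Finset.eq_of_subset_of_card_le hsubY (by omega)).symm
      refine ⟨(a₁, b₁), fun C' hsub hne hcard hd => ?_⟩
      obtain ⟨h1img, h2img⟩ := himg C' hne hd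
      have hc' : C'.card = 3 := le_antisymm hcard (by
        calc 3 = X.card := hm.symm
          _ = (C'.image Prod.fst).card := by rw [h1img]
          _ ≤ C'.card := Finset.card_image_le)
      have hinj' : Set.InjOn Prod.snd (C' : Set (Fin q × Fin q)) :=
        Finset.card_image_iff.mp (by rw [h2img]; omega)
      have hβmem : ∀ a, a ∈ X → ∃ b, (a, b) ∈ C' := fun a ha =>
        exists_partner (by rw [h1img]; exact ha)
      obtain ⟨β₁, hβ₁⟩ := hβmem a₁ (by rw [hXeq]; simp)
      obtain ⟨β₂, hβ₂⟩ := hβmem a₂ (by rw [hXeq]; simp)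
      obtain ⟨β₃, hβ₃⟩ := hβmem a₃ (by rw [hXeq]; simp)
      have hβne : ∀ {x y u v : Fin q}, (x, y) ∈ C' → (u, v) ∈ C' → x ≠ u → y ≠ v := by
        intro x y u v h1 h2 hxu h
        exact hxu (congrArg Prod.fst (hinj' (Finset.mem_coe.mpr h1) (Finset.mem_coe.mpr h2) h))
      have hβY : ∀ {x y : Fin q}, (x, y) ∈ C' → y ∈ Y := fun h => by
        rw [← h2img]; exact Finset.mem_image_of_mem _ h
      have hβ1 : β₁ = b₁ ∨ β₁ = b₂ ∨ β₁ = b₃ := by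
        have := hβY hβ₁; rw [hYeq] at this; simpa using this
      have hβ2 : β₂ = b₁ ∨ β₂ = b₂ ∨ β₂ = b₃ := by
        have := hβY hβ₂; rw [hYeq] at this; simpa using this
      have hβ3 : β₃ = b₁ ∨ β₃ = b₂ ∨ β₃ = b₃ := by
        have := hβY hβ₃; rw [hYeq] at this; simpa using this
      have hβ12 : β₁ ≠ β₂ := hβne hβ₁ hβ₂ ha12
      have hβ13 : β₁ ≠ β₃ := hβne hβ₁ hβ₃ ha13
      have hβ23 : β₂ ≠ β₃ := hβne hβ₂ hβ₃ ha23
      have E : ∀ {x y : Fin q}, (x, y) ∈ C₀ → y ∈ A1 C x := fun h => mem_A1.mpr (hsub0 h)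
      have E' : ∀ {x y : Fin q}, (x, y) ∈ C' → y ∈ A1 C x := fun h => mem_A1.mpr (hsub h)
      rcases hβ1 with h1 | h1 | h1
      · rwa [h1] at hβ₁
      · rcases hβ2 with h2 | h2 | h2
        · rw [h1] at hβ₁; rw [h2] at hβ₂
          exact (condI_contra hI ha12 hb12 (hsub0 hb₁) (hsub hβ₁) (hsub hβ₂) (hsub0 hb₂)).elim
        · exact absurd (h1.trans h2.symm) hβ12
        · rcases hβ3 with h3 | h3 | h3
          · rw [h1] at hβ₁; rw [h2] at hβ₂; rw [h3] at hβ₃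
            exact (hII ⟨a₁, a₂, a₃, b₁, b₂, b₃, ha12, ha13, ha23, hb12, hb13, hb23,
              E hb₁, E' hβ₁, E hb₂, E' hβ₂, E' hβ₃, E hb₃⟩).elim
          · exact absurd (h1.trans h3.symm) hβ13
          · exact absurd (h2.trans h3.symm) hβ23
      · rcases hβ2 with h2 | h2 | h2
        · rcases hβ3 with h3 | h3 | h3
          · exact absurd (h2.trans h3.symm) hβ23
          · rw [h1] at hβ₁; rw [h2] at hβ₂; rw [h3] at hβ₃
            exact (hII ⟨a₂, a₃, a₁, b₁, b₂, b₃, ha23, ha12.symm, ha13.symm, hb12, hb13, hb23,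
              E' hβ₂, E hb₂, E' hβ₃, E hb₃, E hb₁, E' hβ₁⟩).elim
          · exact absurd (h1.trans h3.symm) hβ13
        · rcases hβ3 with h3 | h3 | h3
          · rw [h1] at hβ₁; rw [h3] at hβ₃
            exact (condI_contra hI ha13 hb13 (hsub0 hb₁) (hsub hβ₁) (hsub hβ₃) (hsub0 hb₃)).elim
          · exact absurd (h2.trans h3.symm) hβ23
          · exact absurd (h1.trans h3.symm) hβ13
        · exact absurd (h1.trans h2.symm) hβ12
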